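/- Let (P,Q) be a pair of probability distributions with tradeoff function τ(α) := T_α(P‖Q) (extended to ℝ by setting τ = ∞ outside [0,1]) and hockey-stick curve h(x) := H_x(P‖Q). Then h(x) = 1 + (τ⁻¹)*(−x) for all x > 0, where τ⁻¹(β) := inf{α ∈ [0,1] : τ(α) ≤ β} and g*(y) := sup_{t∈ℝ} (t·y − g(t)) denotes the convex conjugate. -/

import Mathlib

open MeasureTheory Filter Set
open scoped ENNReal NNReal

/-- Hockey-stick divergence `H_x(P‖Q) = sup_E P(E) - x Q(E)` over measurable events. -/
noncomputable def hsDiv {Ω : Type*} [MeasurableSpace Ω] (x : ℝ) (P Q : Measure Ω) : ℝ :=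
  ⨆ E : {E : Set Ω // MeasurableSet E}, ((P E).toReal - x * (Q E).toReal)

/-- Tradeoff function `T_α(P‖Q)`: the infimum of Type II errors `1 - ∫ φ dQ` over
measurable randomized tests `φ : Ω → [0,1]` with Type I error `∫ φ dP ≤ α`. -/
noncomputable def tradeoff {Ω : Type*} [MeasurableSpace Ω] (P Q : Measure Ω) (α : ℝ) : ℝ :=
  sInf {β : ℝ | ∃ φ : Ω → ℝ, Measurable φ ∧ (∀ ω, φ ω ∈ Set.Icc (0 : ℝ) 1) ∧
    (∫ ω, φ ω ∂P) ≤ α ∧ β = 1 - ∫ ω, φ ω ∂Q}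

/-- `τ⁻¹(β) = inf {α ∈ [0,1] : τ(α) ≤ β}`. -/
noncomputable def tradeoffInv {Ω : Type*} [MeasurableSpace Ω] (P Q : Measure Ω) (β : ℝ) : ℝ :=
  sInf {α : ℝ | α ∈ Set.Icc (0 : ℝ) 1 ∧ tradeoff P Q α ≤ β}

set_option linter.unusedSectionVars false

section helpers
variable {Ω : Type*} [MeasurableSpace Ω] {P Q : Measure Ω}
  [IsProbabilityMeasure P] [IsProbabilityMeasure Q]

lemma toReal_prob_le_one (μ : Measure Ω) [IsProbabilityMeasure μ] (E : Set Ω) :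
    (μ E).toReal ≤ 1 := by
  have h := (ENNReal.toReal_le_toReal (measure_ne_top μ E) ENNReal.one_ne_top).mpr
    (prob_le_one (μ := μ) (s := E))
  simpa using h

lemma test_integrable {φ : Ω → ℝ} (hm : Measurable φ) (hb : ∀ ω, φ ω ∈ Set.Icc (0:ℝ) 1) :
    Integrable φ P := by
  refine (integrable_const (1:ℝ)).mono' hm.aestronglyMeasurable ?_
  filter_upwards with ω
  rw [Real.norm_eq_abs, abs_le]
  exact ⟨by linarith [(hb ω).1], (hb ω).2⟩

lemma test_int_mem {φ : Ω → ℝ} (hm : Measurable φ) (hb : ∀ ω, φ ω ∈ Set.Icc (0:ℝ) 1) :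
    (∫ ω, φ ω ∂P) ∈ Set.Icc (0:ℝ) 1 := by
  constructor
  · exact integral_nonneg fun ω => (hb ω).1
  · calc ∫ ω, φ ω ∂P ≤ ∫ _, (1:ℝ) ∂P :=
        integral_mono (test_integrable hm hb) (integrable_const 1) fun ω => (hb ω).2
      _ = 1 := by simp

lemma hsDiv_bddAbove (x : ℝ) (hx : 0 < x) :
    BddAbove (Set.range fun E : {E : Set Ω // MeasurableSet E} =>
      ((P E).toReal - x * (Q E).toReal)) := by
  refine ⟨1, ?_⟩
  rintro y ⟨E, rfl⟩
  have h1 : (P (E : Set Ω)).toReal ≤ 1 := toReal_prob_le_one P E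
  have h2 : 0 ≤ x * (Q (E : Set Ω)).toReal := by positivity
  simp only
  linarith


lemma hsDiv_nonneg (x : ℝ) (hx : 0 < x) : 0 ≤ hsDiv x P Q := by
  have := le_ciSup (hsDiv_bddAbove (P := P) (Q := Q) x hx) ⟨∅, MeasurableSet.empty⟩
  simpa [hsDiv] using this

lemma set_le_hsDiv (x : ℝ) (hx : 0 < x) {E : Set Ω} (hE : MeasurableSet E) :
    (P E).toReal - x * (Q E).toReal ≤ hsDiv x P Q :=
  le_ciSup (hsDiv_bddAbove (P := P) (Q := Q) x hx) ⟨E, hE⟩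

/-- Key lemma: any randomized test is dominated by the hockey-stick sup over sets. -/
lemma test_le_hsDiv (x : ℝ) (hx : 0 < x) {φ : Ω → ℝ} (hm : Measurable φ)
    (hb : ∀ ω, φ ω ∈ Set.Icc (0:ℝ) 1) :
    (∫ ω, φ ω ∂P) - x * ∫ ω, φ ω ∂Q ≤ hsDiv x P Q := by
  set p : ℝ → ℝ := fun t => (P {a | t ≤ φ a}).toReal with hp
  set q : ℝ → ℝ := fun t => (Q {a | t ≤ φ a}).toReal with hq
  have hPl : ∫ ω, φ ω ∂P = ∫ t in Set.Ioc (0:ℝ) 1, p t :=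
    (test_integrable hm hb).integral_eq_integral_Ioc_meas_le
      (Eventually.of_forall fun ω => (hb ω).1) (Eventually.of_forall fun ω => (hb ω).2)
  have hQl : ∫ ω, φ ω ∂Q = ∫ t in Set.Ioc (0:ℝ) 1, q t :=
    (test_integrable hm hb).integral_eq_integral_Ioc_meas_le
      (Eventually.of_forall fun ω => (hb ω).1) (Eventually.of_forall fun ω => (hb ω).2)
  have meas_p : ∀ (μ : Measure Ω), Measurable (fun t => (μ {a | t ≤ φ a}).toReal) := by
    intro μ
    refine Measurable.ennreal_toReal (Antitone.measurable ?_)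
    intro s t hst
    exact measure_mono fun a ha => le_trans hst ha
  have int_gen : ∀ (μ : Measure Ω) [IsProbabilityMeasure μ],
      IntegrableOn (fun t => (μ {a | t ≤ φ a}).toReal) (Set.Ioc (0:ℝ) 1) volume := by
    intro μ _
    refine Integrable.mono' (g := fun _ => (1:ℝ)) ?_ ((meas_p μ).aestronglyMeasurable).restrict ?_
    · exact (integrableOn_const_iff (C := (1:ℝ))).mpr (Or.inr (by simp))
    · filter_upwards with t
      rw [Real.norm_eq_abs, abs_le]
      exact ⟨by linarith [ENNReal.toReal_nonneg (a := μ {a | t ≤ φ a})],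
        toReal_prob_le_one μ _⟩
  have int_p : IntegrableOn p (Set.Ioc (0:ℝ) 1) volume := int_gen P
  have int_q : IntegrableOn q (Set.Ioc (0:ℝ) 1) volume := int_gen Q
  rw [hPl, hQl, ← integral_const_mul, ← integral_sub int_p (int_q.const_mul x)]
  calc ∫ t in Set.Ioc (0:ℝ) 1, (p t - x * q t)
      ≤ ∫ _ in Set.Ioc (0:ℝ) 1, hsDiv x P Q := by
        refine setIntegral_mono_on (int_p.sub (int_q.const_mul x))
          ((integrableOn_const_iff).mpr (Or.inr (by simp))) measurableSet_Ioc ?_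
        intro t _
        exact set_le_hsDiv x hx (hm measurableSet_Ici)
    _ = hsDiv x P Q := by simp
end helpers

section main
variable {Ω : Type*} [MeasurableSpace Ω] {P Q : Measure Ω}
  [IsProbabilityMeasure P] [IsProbabilityMeasure Q]
set_option linter.unusedSectionVars false

lemma beta_bddBelow (α : ℝ) :
    BddBelow {β : ℝ | ∃ φ : Ω → ℝ, Measurable φ ∧ (∀ ω, φ ω ∈ Set.Icc (0 : ℝ) 1) ∧
      (∫ ω, φ ω ∂P) ≤ α ∧ β = 1 - ∫ ω, φ ω ∂Q} := by
  refine ⟨0, ?_⟩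
  rintro β ⟨φ, hm, hb, -, rfl⟩
  have := (test_int_mem (P := Q) hm hb).2
  linarith

lemma tradeoff_le_of_test (α : ℝ) {φ : Ω → ℝ} (hm : Measurable φ)
    (hb : ∀ ω, φ ω ∈ Set.Icc (0 : ℝ) 1) (hα : (∫ ω, φ ω ∂P) ≤ α) :
    tradeoff P Q α ≤ 1 - ∫ ω, φ ω ∂Q :=
  csInf_le (beta_bddBelow α) ⟨φ, hm, hb, hα, rfl⟩

lemma one_mem_S {t : ℝ} (ht : 0 ≤ t) :
    (1:ℝ) ∈ {α : ℝ | α ∈ Set.Icc (0 : ℝ) 1 ∧ tradeoff P Q α ≤ t} := by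
  refine ⟨⟨zero_le_one, le_refl 1⟩, ?_⟩
  have h := tradeoff_le_of_test (P := P) (Q := Q) 1 (φ := fun _ => 1) measurable_const
    (fun ω => ⟨zero_le_one, le_refl 1⟩) (by simp)
  simp only [integral_const, probReal_univ, smul_eq_mul, one_mul] at h
  linarith

lemma S_bddBelow (t : ℝ) :
    BddBelow {α : ℝ | α ∈ Set.Icc (0 : ℝ) 1 ∧ tradeoff P Q α ≤ t} :=
  ⟨0, fun α hα => hα.1.1⟩

lemma tradeoffInv_nonneg {t : ℝ} (ht : 0 ≤ t) : 0 ≤ tradeoffInv P Q t :=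
  le_csInf ⟨1, one_mem_S ht⟩ fun α hα => hα.1.1

lemma tradeoffInv_ge (x : ℝ) (hx : 0 < x) {t : ℝ} (ht : t ∈ Set.Icc (0:ℝ) 1) :
    1 - x * t - hsDiv x P Q ≤ tradeoffInv P Q t := by
  refine le_csInf ⟨1, one_mem_S ht.1⟩ ?_
  rintro α ⟨hαI, hτ⟩
  -- show 1 - x*t - h ≤ α, i.e. ∀ δ > 0, 1 - x*t - h ≤ α + δ
  refine le_of_forall_pos_le_add ?_
  intro δ hδ
  set ε := δ / x with hε
  have hεpos : 0 < ε := div_pos hδ hx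
  -- the beta set at level α is nonempty (φ ≡ 0)
  have hne : {β : ℝ | ∃ φ : Ω → ℝ, Measurable φ ∧ (∀ ω, φ ω ∈ Set.Icc (0 : ℝ) 1) ∧
      (∫ ω, φ ω ∂P) ≤ α ∧ β = 1 - ∫ ω, φ ω ∂Q}.Nonempty := by
    refine ⟨1, fun _ => 0, measurable_const, fun ω => ⟨le_refl 0, zero_le_one⟩, ?_, by simp⟩
    simpa using hαI.1
  have hlt : tradeoff P Q α < t + ε := lt_of_le_of_lt hτ (by linarith)
  obtain ⟨β, hβmem, hβlt⟩ := exists_lt_of_csInf_lt hne hlt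
  obtain ⟨φ, hm, hb, hφP, rfl⟩ := hβmem
  -- complementary test ψ = 1 - φ
  set ψ : Ω → ℝ := fun ω => 1 - φ ω with hψ
  have hψm : Measurable ψ := measurable_const.sub hm
  have hψb : ∀ ω, ψ ω ∈ Set.Icc (0:ℝ) 1 := fun ω =>
    ⟨by simp [hψ]; linarith [(hb ω).2], by simp [hψ]; linarith [(hb ω).1]⟩
  have hψP : ∫ ω, ψ ω ∂P = 1 - ∫ ω, φ ω ∂P := by
    simp [hψ, integral_sub (integrable_const 1) (test_integrable hm hb)]
  have hψQ : ∫ ω, ψ ω ∂Q = 1 - ∫ ω, φ ω ∂Q := by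
    simp [hψ, integral_sub (integrable_const 1) (test_integrable hm hb)]
  have hkey := test_le_hsDiv (P := P) (Q := Q) x hx hψm hψb
  rw [hψP, hψQ] at hkey
  have hQb : 1 - ∫ ω, φ ω ∂Q < t + ε := hβlt
  have hxε : x * ε = δ := by rw [hε, mul_div_assoc']; exact mul_div_cancel_left₀ δ hx.ne'
  nlinarith [hkey, hφP, hQb, hx.le]


/-- `h(x) = 1 + (τ⁻¹)*(-x)`: the hockey-stick curve is determined by the convex conjugate
of the inverse tradeoff function (the conjugate of `τ⁻¹` extended by `∞` outside `[0,1]`,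
so the supremum runs over `t ∈ [0,1]`). -/
theorem stmt5_aux (x : ℝ) (hx : 0 < x) :
    hsDiv x P Q = 1 + ⨆ t : Set.Icc (0 : ℝ) 1, ((t : ℝ) * (-x) - tradeoffInv P Q t) := by
  have hbdd : BddAbove (Set.range fun t : Set.Icc (0:ℝ) 1 =>
      ((t : ℝ) * (-x) - tradeoffInv P Q (t : ℝ))) := by
    refine ⟨0, ?_⟩
    rintro y ⟨t, rfl⟩
    have h1 : (t : ℝ) * (-x) ≤ 0 := mul_nonpos_of_nonneg_of_nonpos t.2.1 (by linarith)
    have h2 : 0 ≤ tradeoffInv P Q (t : ℝ) := tradeoffInv_nonneg t.2.1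
    simp only
    linarith
  apply le_antisymm
  · -- h ≤ 1 + sup
    refine ciSup_le ?_
    rintro ⟨E, hE⟩
    simp only
    set t : ℝ := (Q E).toReal with htdef
    have htI : t ∈ Set.Icc (0:ℝ) 1 := ⟨ENNReal.toReal_nonneg, toReal_prob_le_one Q E⟩
    -- the complementary indicator test
    set φ : Ω → ℝ := Eᶜ.indicator (fun _ => 1) with hφdef
    have hφm : Measurable φ := measurable_const.indicator hE.compl
    have hφb : ∀ ω, φ ω ∈ Set.Icc (0:ℝ) 1 := by
      intro ω
      by_cases h : ω ∈ Eᶜ <;> simp [hφdef, h]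
    have hcomp : ∀ (μ : Measure Ω) [IsProbabilityMeasure μ],
        ∫ ω, φ ω ∂μ = 1 - (μ E).toReal := by
      intro μ _
      rw [hφdef, integral_indicator_const (1:ℝ) hE.compl, smul_eq_mul, mul_one, measureReal_def,
        measure_compl hE (measure_ne_top μ E), measure_univ,
        ENNReal.toReal_sub_of_le prob_le_one ENNReal.one_ne_top, ENNReal.toReal_one]
    have hτ : tradeoff P Q (1 - (P E).toReal) ≤ t := by
      have h := tradeoff_le_of_test (P := P) (Q := Q) (1 - (P E).toReal) hφm hφb
        (le_of_eq (hcomp P))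
      rw [hcomp Q] at h
      linarith
    have hmemS : (1 - (P E).toReal) ∈
        {α : ℝ | α ∈ Set.Icc (0 : ℝ) 1 ∧ tradeoff P Q α ≤ t} := by
      refine ⟨⟨by linarith [toReal_prob_le_one P E], by
        linarith [ENNReal.toReal_nonneg (a := P E)]⟩, hτ⟩
    have hinv : tradeoffInv P Q t ≤ 1 - (P E).toReal := csInf_le (S_bddBelow t) hmemS
    have hsup := le_ciSup hbdd (⟨t, htI⟩ : Set.Icc (0:ℝ) 1)
    simp only at hsup
    nlinarith [hsup, hinv]
  · -- 1 + sup ≤ h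
    have hsup : (⨆ t : Set.Icc (0 : ℝ) 1, ((t : ℝ) * (-x) - tradeoffInv P Q t)) ≤
        hsDiv x P Q - 1 := by
      refine ciSup_le ?_
      rintro ⟨t, ht⟩
      have := tradeoffInv_ge (P := P) (Q := Q) x hx ht
      simp only
      nlinarith
    linarith

end main

theorem stmt5 {Ω : Type*} [MeasurableSpace Ω] (P Q : Measure Ω)
    [IsProbabilityMeasure P] [IsProbabilityMeasure Q] (x : ℝ) (hx : 0 < x) :
    hsDiv x P Q = 1 + ⨆ t : Set.Icc (0 : ℝ) 1, ((t : ℝ) * (-x) - tradeoffInv P Q t) :=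
  stmt5_aux (P := P) (Q := Q) x hx
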